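/- Symmetry of the Kawai–Yoshioka coefficients underlying the motivic theory: let W = P · Q, where P = Σ_{j,j'≥0} u^{j−j'} y^{j+j'+1} (the expansion of 1/((uy−1)(u^{−1}−y^{−1})) in positive powers of y) and Q = ∏_{n≥1} [(1 − u^{−1}y^{−1}q^n)(1 − u^{−1}y q^n)(1 − q^n)^{20}(1 − u y^{−1} q^n)(1 − u y q^n)]^{−1}, regarded as an element of S[[q]] with S the ring of formal Laurent series in y over ℤ[u, u^{−1}]. Then for all integers h, d ≥ 0 (with the convention that the coefficient of q^{−1} of an element of S[[q]] is 0), the coefficient of y^{1−h+d} in the q^{h−1} coefficient of W equals the coefficient of y^{1−d+h} in the q^{d−1} coefficient of W, as elements of ℤ[u, u^{−1}]. -/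

import Mathlib

noncomputable section

/-- `S = ℤ[u,u⁻¹]((y))`, formal Laurent series in `y` over Laurent polynomials in `u`. -/
abbrev S13 : Type := LaurentSeries (LaurentPolynomial ℤ)

instance : TopologicalSpace S13 := ⊥

/-- The product (pi) topology on `S⟦q⟧`, coefficientwise. -/
instance : TopologicalSpace (PowerSeries S13) :=
  inferInstanceAs (TopologicalSpace ((Unit →₀ ℕ) → S13))

/-- `P = ∑_{j,j' ≥ 0} u^{j−j'} y^{j+j'+1} ∈ S`, the expansion of
`1/((uy−1)(u⁻¹−y⁻¹))` in positive powers of `y`, written as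
`y·(∑_j u^j y^j)·(∑_{j'} u^{−j'} y^{j'})`. -/
def Pser : S13 :=
  HahnSeries.single (1 : ℤ) 1 *
    HahnSeries.ofPowerSeries ℤ (LaurentPolynomial ℤ)
      (PowerSeries.mk fun j => LaurentPolynomial.T (j : ℤ)) *
    HahnSeries.ofPowerSeries ℤ (LaurentPolynomial ℤ)
      (PowerSeries.mk fun j => LaurentPolynomial.T (-(j : ℤ)))

/-- `Q = ∏_{n ≥ 1} [(1 − u⁻¹y⁻¹q^n)(1 − u⁻¹y q^n)(1 − q^n)^20(1 − u y⁻¹ q^n)(1 − u y q^n)]⁻¹`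
in `S⟦q⟧`. -/
def Qser : PowerSeries S13 :=
  ∏' n : ℕ, Ring.inverse
    ((1 - PowerSeries.C (R := S13) (HahnSeries.single (-1 : ℤ) (LaurentPolynomial.T (-1))) *
        PowerSeries.X ^ (n + 1)) *
     (1 - PowerSeries.C (R := S13) (HahnSeries.single (1 : ℤ) (LaurentPolynomial.T (-1))) *
        PowerSeries.X ^ (n + 1)) *
     (1 - (PowerSeries.X : PowerSeries S13) ^ (n + 1)) ^ 20 *
     (1 - PowerSeries.C (R := S13) (HahnSeries.single (-1 : ℤ) (LaurentPolynomial.T 1)) *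
        PowerSeries.X ^ (n + 1)) *
     (1 - PowerSeries.C (R := S13) (HahnSeries.single (1 : ℤ) (LaurentPolynomial.T 1)) *
        PowerSeries.X ^ (n + 1)))

/-- `W = P·Q ∈ S⟦q⟧`, the Kawai–Yoshioka generating series. -/
def Wser : PowerSeries S13 := PowerSeries.C (R := S13) Pser * Qser

/-- The `q^m` coefficient of `W`, with the convention that the `q^{−1}` coefficient
(and every negative coefficient) is `0`. -/
def cfW (m : ℤ) : S13 := if 0 ≤ m then PowerSeries.coeff (R := S13) m.toNat Wser else 0

/- ===================================================================== -/
/- Auxiliary development for the proof.                                  -/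
/- ===================================================================== -/

namespace KYaux

open PowerSeries LaurentPolynomial Finset Filter Topology

abbrev Lp := LaurentPolynomial ℤ
abbrev PS := PowerSeries S13

instance : DiscreteTopology S13 := ⟨rfl⟩

instance : T2Space PS := inferInstanceAs (T2Space ((Unit →₀ ℕ) → S13))

/-! ### Generic power series facts -/

section Generic
variable {A : Type*} [CommRing A]

/-- Explicit inverse of `1 - C s * X^(k+1)`. -/
def geom (s : A) (k : ℕ) : PowerSeries A :=
  PowerSeries.mk fun a => if (k + 1) ∣ a then s ^ (a / (k + 1)) else 0

lemma geom_mul (s : A) (k : ℕ) :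
    (1 - PowerSeries.C (R := A) s * PowerSeries.X ^ (k + 1)) * geom s k = 1 := by
  ext N
  rw [sub_mul, one_mul, map_sub]
  rw [show PowerSeries.C (R := A) s * PowerSeries.X ^ (k+1) * geom s k
      = geom s k * PowerSeries.X ^ (k+1) * PowerSeries.C (R := A) s from by ring]
  rw [PowerSeries.coeff_mul_C, PowerSeries.coeff_mul_X_pow']
  simp only [geom, PowerSeries.coeff_mk, PowerSeries.coeff_one]
  rcases Nat.eq_zero_or_pos N with rfl | hN
  · simp
  · rw [if_neg (by omega : ¬ N = 0)]
    by_cases hle : k + 1 ≤ N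
    · rw [if_pos hle]
      by_cases hdvd : (k+1) ∣ N
      · rw [if_pos hdvd, if_pos (Nat.dvd_sub hdvd dvd_rfl)]
        have hstep : N / (k+1) = (N - (k+1)) / (k+1) + 1 := by
          obtain ⟨c, rfl⟩ := hdvd
          have hc : 1 ≤ c := by nlinarith
          obtain ⟨c', rfl⟩ : ∃ c', c = c' + 1 := ⟨c - 1, by omega⟩
          have hms : (k+1)*(c'+1) - (k+1) = (k+1)*c' := by
            rw [Nat.mul_succ, Nat.add_sub_cancel]
          rw [Nat.mul_div_cancel_left _ (by omega), hms,
            Nat.mul_div_cancel_left _ (by omega)]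
        rw [hstep, pow_succ, sub_self]
      · rw [if_neg hdvd, if_neg (fun hc => hdvd (by
          have h2 := Nat.dvd_add hc (dvd_refl (k+1))
          rwa [Nat.sub_add_cancel hle] at h2))]
        simp
    · rw [if_neg hle]
      by_cases hdvd : (k+1) ∣ N
      · exact absurd (Nat.le_of_dvd hN hdvd) hle
      · rw [if_neg hdvd]; simp

end Generic

/-! ### The binomial factors -/

/-- `bin ε e k = 1 - u^e y^ε q^k`. -/
def bin (ε e : ℤ) (k : ℕ) : PS :=
  1 - PowerSeries.C (R := S13) (HahnSeries.single ε (LaurentPolynomial.T e)) * PowerSeries.X ^ k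

lemma bin_zero_zero (k : ℕ) : bin 0 0 k = 1 - PowerSeries.X ^ k := by
  unfold bin
  rw [LaurentPolynomial.T_zero, HahnSeries.single_zero_one, map_one, one_mul]

/-- The `n`-th factor of the denominator. -/
def Fden (n : ℕ) : PS :=
  (1 - PowerSeries.C (R := S13) (HahnSeries.single (-1 : ℤ) (LaurentPolynomial.T (-1))) *
      PowerSeries.X ^ (n + 1)) *
   (1 - PowerSeries.C (R := S13) (HahnSeries.single (1 : ℤ) (LaurentPolynomial.T (-1))) *
      PowerSeries.X ^ (n + 1)) *
   (1 - (PowerSeries.X : PS) ^ (n + 1)) ^ 20 *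
   (1 - PowerSeries.C (R := S13) (HahnSeries.single (-1 : ℤ) (LaurentPolynomial.T 1)) *
      PowerSeries.X ^ (n + 1)) *
   (1 - PowerSeries.C (R := S13) (HahnSeries.single (1 : ℤ) (LaurentPolynomial.T 1)) *
      PowerSeries.X ^ (n + 1))

lemma Fden_eq_bin (n : ℕ) :
    Fden n = bin (-1) (-1) (n+1) * bin 1 (-1) (n+1) * (bin 0 0 (n+1)) ^ 20 *
      bin (-1) 1 (n+1) * bin 1 1 (n+1) := by
  rw [bin_zero_zero]; rfl

lemma Qser_eq : Qser = ∏' n : ℕ, Ring.inverse (Fden n) := rfl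

/-- Explicit inverse of `Fden n`. -/
def FdenInv (n : ℕ) : PS :=
  geom (A := S13) (HahnSeries.single (-1 : ℤ) (LaurentPolynomial.T (-1))) n *
  geom (A := S13) (HahnSeries.single (1 : ℤ) (LaurentPolynomial.T (-1))) n *
  (geom (1 : S13) n) ^ 20 *
  geom (A := S13) (HahnSeries.single (-1 : ℤ) (LaurentPolynomial.T 1)) n *
  geom (A := S13) (HahnSeries.single (1 : ℤ) (LaurentPolynomial.T 1)) n

lemma bin_mul_geom (ε e : ℤ) (n : ℕ) :
    bin ε e (n+1) * geom (A := S13) (HahnSeries.single ε (LaurentPolynomial.T e)) n = 1 :=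
  geom_mul _ n

lemma bin00_mul_geom (n : ℕ) : bin 0 0 (n+1) * geom (1 : S13) n = 1 := by
  have := geom_mul (1 : S13) n
  rwa [map_one, one_mul, ← bin_zero_zero] at this

lemma Fden_mul_FdenInv (n : ℕ) : Fden n * FdenInv n = 1 := by
  rw [Fden_eq_bin]
  unfold FdenInv
  have h1 := bin_mul_geom (-1) (-1) n
  have h2 := bin_mul_geom 1 (-1) n
  have h3 := bin00_mul_geom n
  have h4 := bin_mul_geom (-1) 1 n
  have h5 := bin_mul_geom 1 1 n
  calc bin (-1) (-1) (n+1) * bin 1 (-1) (n+1) * bin 0 0 (n+1) ^ 20 * bin (-1) 1 (n+1) *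
        bin 1 1 (n+1) *
        (geom (A := S13) (HahnSeries.single (-1 : ℤ) (LaurentPolynomial.T (-1))) n *
          geom (A := S13) (HahnSeries.single (1 : ℤ) (LaurentPolynomial.T (-1))) n *
          (geom (1 : S13) n) ^ 20 *
          geom (A := S13) (HahnSeries.single (-1 : ℤ) (LaurentPolynomial.T 1)) n *
          geom (A := S13) (HahnSeries.single (1 : ℤ) (LaurentPolynomial.T 1)) n)
      = (bin (-1) (-1) (n+1) * geom (A := S13) (HahnSeries.single (-1 : ℤ) (LaurentPolynomial.T (-1))) n) *
        ((bin 1 (-1) (n+1) * geom (A := S13) (HahnSeries.single (1 : ℤ) (LaurentPolynomial.T (-1))) n) *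
        ((bin 0 0 (n+1) * geom (1 : S13) n) ^ 20 *
        ((bin (-1) 1 (n+1) * geom (A := S13) (HahnSeries.single (-1 : ℤ) (LaurentPolynomial.T 1)) n) *
        (bin 1 1 (n+1) * geom (A := S13) (HahnSeries.single (1 : ℤ) (LaurentPolynomial.T 1)) n)))) := by
        ring
    _ = 1 := by rw [h1, h2, h3, h4, h5]; norm_num

lemma isUnit_Fden (n : ℕ) : IsUnit (Fden n) :=
  IsUnit.of_mul_eq_one _ (Fden_mul_FdenInv n)

lemma ringInverse_Fden (n : ℕ) : Ring.inverse (Fden n) = FdenInv n := by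
  obtain ⟨u, hu⟩ := isUnit_Fden n
  rw [← hu, Ring.inverse_unit]
  exact Units.inv_eq_of_mul_eq_one_right (by rw [hu]; exact Fden_mul_FdenInv n)

/-! ### The congruence `≡ 1 mod X^m` -/

/-- `EE m g` means `g ≡ 1 mod X^m`. -/
def EE (m : ℕ) (g : PS) : Prop := PowerSeries.X ^ m ∣ g - 1

lemma EE.one (m : ℕ) : EE m 1 := by simp [EE]

lemma EE.mul {m : ℕ} {f g : PS} (hf : EE m f) (hg : EE m g) : EE m (f * g) := by
  have h : f * g - 1 = f * (g - 1) + (f - 1) := by ring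
  rw [EE, h]
  exact dvd_add (dvd_mul_of_dvd_right hg f) hf

lemma EE.pow {m : ℕ} {f : PS} (hf : EE m f) (j : ℕ) : EE m (f ^ j) := by
  induction j with
  | zero => simpa using EE.one m
  | succ j ih => rw [pow_succ]; exact ih.mul hf

lemma EE.prod {m : ℕ} {s : Finset ℕ} {f : ℕ → PS} (h : ∀ n ∈ s, EE m (f n)) :
    EE m (∏ n ∈ s, f n) :=
  Finset.prod_induction f (EE m) (fun _ _ => EE.mul) (EE.one m) h

lemma EE.mono {m m' : ℕ} {f : PS} (h : m' ≤ m) (hf : EE m f) : EE m' f :=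
  dvd_trans (pow_dvd_pow _ h) hf

lemma EE.inv {m : ℕ} {f v : PS} (hfv : f * v = 1) (hf : EE m f) : EE m v := by
  have h : v - 1 = -((f - 1) * v) := by rw [sub_mul, hfv]; ring
  rw [EE, h]
  exact (dvd_neg).mpr (dvd_mul_of_dvd_left hf v)

lemma EE_bin {m : ℕ} (ε e : ℤ) (k : ℕ) (h : m ≤ k) : EE m (bin ε e k) := by
  unfold EE bin
  rw [show 1 - PowerSeries.C (R := S13) (HahnSeries.single ε (LaurentPolynomial.T e)) *
        PowerSeries.X ^ k - 1
      = -(PowerSeries.C (R := S13) (HahnSeries.single ε (LaurentPolynomial.T e)) *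
        PowerSeries.X ^ k) from by ring]
  exact (dvd_neg).mpr (dvd_mul_of_dvd_right (pow_dvd_pow _ h) _)

lemma EE_Fden {m : ℕ} (n : ℕ) (h : m ≤ n + 1) : EE m (Fden n) := by
  rw [Fden_eq_bin]
  exact ((((EE_bin _ _ _ h).mul (EE_bin _ _ _ h)).mul ((EE_bin _ _ _ h).pow 20)).mul
    (EE_bin _ _ _ h)).mul (EE_bin _ _ _ h)

lemma EE_FdenRinv {m : ℕ} (n : ℕ) (h : m ≤ n + 1) : EE m (Ring.inverse (Fden n)) := by
  rw [ringInverse_Fden]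
  exact EE.inv (Fden_mul_FdenInv n) (EE_Fden n h)

lemma coeff_mul_EE {N : ℕ} {g : PS} (hg : EE (N+1) g) (p : PS) :
    PowerSeries.coeff (R := S13) N (p * g) = PowerSeries.coeff (R := S13) N p := by
  have h : p * g = p + p * (g - 1) := by ring
  rw [h, map_add]
  have hdvd : PowerSeries.X ^ (N+1) ∣ p * (g - 1) := dvd_mul_of_dvd_right hg p
  rw [PowerSeries.X_pow_dvd_iff] at hdvd
  rw [hdvd N (by omega), add_zero]

/-! ### Computing the infinite product coefficientwise -/

lemma coeff_eq_of_subset {h : ℕ → PS} (hE : ∀ n, EE (n+1) (h n)) {N : ℕ} {F : Finset ℕ}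
    (hF : Finset.range N ⊆ F) :
    PowerSeries.coeff (R := S13) N (∏ n ∈ F, h n) =
      PowerSeries.coeff (R := S13) N (∏ n ∈ Finset.range N, h n) := by
  rw [← Finset.prod_sdiff hF]
  rw [show (∏ n ∈ F \ Finset.range N, h n) * ∏ n ∈ Finset.range N, h n
      = (∏ n ∈ Finset.range N, h n) * ∏ n ∈ F \ Finset.range N, h n from mul_comm _ _]
  refine coeff_mul_EE (EE.prod fun n hn => ?_) _
  rw [Finset.mem_sdiff, Finset.mem_range] at hn
  exact (hE n).mono (by omega)

lemma hasProd_of_EE (h : ℕ → PS) (hE : ∀ n, EE (n+1) (h n)) :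
    HasProd h (PowerSeries.mk fun N =>
      PowerSeries.coeff (R := S13) N (∏ n ∈ Finset.range N, h n)) := by
  set L : PS := PowerSeries.mk fun N =>
      PowerSeries.coeff (R := S13) N (∏ n ∈ Finset.range N, h n) with hL
  rw [HasProd]
  have key : ∀ d : Unit →₀ ℕ,
      Tendsto (fun F : Finset ℕ => (∏ n ∈ F, h n) d) atTop (𝓝 (L d)) := by
    intro d
    rw [nhds_discrete, tendsto_pure]
    filter_upwards [Filter.eventually_ge_atTop (Finset.range (d ()))] with F hF
    have hd : d = Finsupp.single () (d ()) := Finsupp.unique_single d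
    have e1 : (∏ n ∈ F, h n) d = PowerSeries.coeff (R := S13) (d ()) (∏ n ∈ F, h n) := by
      conv_lhs => rw [hd]
      rfl
    have e2 : L d = PowerSeries.coeff (R := S13) (d ()) L := by
      conv_lhs => rw [hd]
      rfl
    rw [e1, e2, hL, PowerSeries.coeff_mk]
    exact coeff_eq_of_subset hE hF
  exact tendsto_pi_nhds.mpr key

lemma coeff_tprod (h : ℕ → PS) (hE : ∀ n, EE (n+1) (h n)) (N : ℕ) :
    PowerSeries.coeff (R := S13) N (∏' n, h n) =
      PowerSeries.coeff (R := S13) N (∏ n ∈ Finset.range N, h n) := by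
  rw [(hasProd_of_EE h hE).tprod_eq, PowerSeries.coeff_mk]

lemma coeff_Qser (j M : ℕ) (h : j ≤ M) :
    PowerSeries.coeff (R := S13) j Qser =
      PowerSeries.coeff (R := S13) j (∏ n ∈ Finset.range M, Ring.inverse (Fden n)) := by
  rw [Qser_eq, coeff_tprod _ (fun n => EE_FdenRinv n (by omega))]
  exact (coeff_eq_of_subset (fun n => EE_FdenRinv n (by omega))
    (Finset.range_subset_range.2 h)).symm

/-! ### Coefficient truncation for products -/

lemma coeff_mul_congr {A A' : PS} (B : PS) (N : ℕ)
    (hA : ∀ j ≤ N, PowerSeries.coeff (R := S13) j A = PowerSeries.coeff (R := S13) j A') :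
    PowerSeries.coeff (R := S13) N (A * B) = PowerSeries.coeff (R := S13) N (A' * B) := by
  rw [PowerSeries.coeff_mul, PowerSeries.coeff_mul]
  refine Finset.sum_congr rfl fun p hp => ?_
  rw [Finset.HasAntidiagonal.mem_antidiagonal] at hp
  rw [hA p.1 (by omega)]

/-! ### The `P`-side geometric series -/

/-- `pd1 = 1 - u y`. -/
def pd1 : S13 := 1 - HahnSeries.single (1 : ℤ) (LaurentPolynomial.T 1)

/-- `pd2 = 1 - u⁻¹ y`. -/
def pd2 : S13 := 1 - HahnSeries.single (1 : ℤ) (LaurentPolynomial.T (-1))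

lemma ofPS_pd (e : ℤ) :
    HahnSeries.ofPowerSeries ℤ Lp
        (1 - PowerSeries.C (R := Lp) (LaurentPolynomial.T e) * PowerSeries.X ^ 1)
      = 1 - HahnSeries.single (1 : ℤ) (LaurentPolynomial.T e) := by
  simp only [map_sub, map_one, map_mul, map_pow, HahnSeries.ofPowerSeries_C,
    HahnSeries.ofPowerSeries_X, pow_one]
  congr 1
  rw [HahnSeries.C_apply, HahnSeries.single_mul_single, zero_add, mul_one]

lemma mk_T_eq_geom : (PowerSeries.mk fun j => LaurentPolynomial.T (j : ℤ) : PowerSeries Lp)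
    = geom (LaurentPolynomial.T 1) 0 := by
  refine PowerSeries.ext fun a => ?_
  rw [PowerSeries.coeff_mk]
  simp only [geom, PowerSeries.coeff_mk, Nat.zero_add]
  rw [if_pos (one_dvd a), Nat.div_one, LaurentPolynomial.T_pow, mul_one]

lemma mk_T_neg_eq_geom :
    (PowerSeries.mk fun j => LaurentPolynomial.T (-(j : ℤ)) : PowerSeries Lp)
    = geom (LaurentPolynomial.T (-1)) 0 := by
  refine PowerSeries.ext fun a => ?_
  rw [PowerSeries.coeff_mk]
  simp only [geom, PowerSeries.coeff_mk, Nat.zero_add]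
  rw [if_pos (one_dvd a), Nat.div_one, LaurentPolynomial.T_pow]
  congr 1
  ring

lemma Pser_mul_pd : Pser * (pd1 * pd2) = HahnSeries.single (1 : ℤ) 1 := by
  have g1 : HahnSeries.ofPowerSeries ℤ Lp
        (1 - PowerSeries.C (R := Lp) (LaurentPolynomial.T 1) * PowerSeries.X ^ 1) *
      HahnSeries.ofPowerSeries ℤ Lp (geom (LaurentPolynomial.T 1) 0) = 1 := by
    rw [← map_mul, show (1 : PowerSeries Lp) - PowerSeries.C (R := Lp) (LaurentPolynomial.T 1) *
        PowerSeries.X ^ 1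
      = 1 - PowerSeries.C (R := Lp) (LaurentPolynomial.T 1) * PowerSeries.X ^ (0+1) from by norm_num,
      geom_mul, map_one]
  have g2 : HahnSeries.ofPowerSeries ℤ Lp
        (1 - PowerSeries.C (R := Lp) (LaurentPolynomial.T (-1)) * PowerSeries.X ^ 1) *
      HahnSeries.ofPowerSeries ℤ Lp (geom (LaurentPolynomial.T (-1)) 0) = 1 := by
    rw [← map_mul, show (1 : PowerSeries Lp) - PowerSeries.C (R := Lp) (LaurentPolynomial.T (-1)) *
        PowerSeries.X ^ 1
      = 1 - PowerSeries.C (R := Lp) (LaurentPolynomial.T (-1)) * PowerSeries.X ^ (0+1) from by norm_num,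
      geom_mul, map_one]
  unfold Pser pd1 pd2
  rw [← ofPS_pd 1, ← ofPS_pd (-1)]
  rw [mk_T_eq_geom, mk_T_neg_eq_geom]
  calc HahnSeries.single (1:ℤ) (1:Lp) *
        HahnSeries.ofPowerSeries ℤ Lp (geom (LaurentPolynomial.T 1) 0) *
        HahnSeries.ofPowerSeries ℤ Lp (geom (LaurentPolynomial.T (-1)) 0) *
        (HahnSeries.ofPowerSeries ℤ Lp
            (1 - PowerSeries.C (R := Lp) (LaurentPolynomial.T 1) * PowerSeries.X ^ 1) *
          HahnSeries.ofPowerSeries ℤ Lp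
            (1 - PowerSeries.C (R := Lp) (LaurentPolynomial.T (-1)) * PowerSeries.X ^ 1))
      = HahnSeries.single (1:ℤ) (1:Lp) *
        ((HahnSeries.ofPowerSeries ℤ Lp
            (1 - PowerSeries.C (R := Lp) (LaurentPolynomial.T 1) * PowerSeries.X ^ 1) *
          HahnSeries.ofPowerSeries ℤ Lp (geom (LaurentPolynomial.T 1) 0)) *
        (HahnSeries.ofPowerSeries ℤ Lp
            (1 - PowerSeries.C (R := Lp) (LaurentPolynomial.T (-1)) * PowerSeries.X ^ 1) *
          HahnSeries.ofPowerSeries ℤ Lp (geom (LaurentPolynomial.T (-1)) 0))) := by ring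
    _ = HahnSeries.single (1:ℤ) (1:Lp) := by rw [g1, g2]; norm_num

/-! ### The finite denominators -/

/-- `Dfin M = (1-uy)(1-u⁻¹y) ∏_{n<M} Fden n`. -/
def Dfin (M : ℕ) : PS :=
  PowerSeries.C (R := S13) pd1 * PowerSeries.C (R := S13) pd2 * ∏ n ∈ Finset.range M, Fden n

lemma beta (M N : ℕ) (h : N ≤ M) :
    PowerSeries.coeff (R := S13) N (Wser * Dfin M) =
      PowerSeries.coeff (R := S13) N (PowerSeries.C (R := S13) (HahnSeries.single (1 : ℤ) 1)) := by
  have e1 : Wser * Dfin M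
      = Qser * ((∏ n ∈ Finset.range M, Fden n) * PowerSeries.C (R := S13) (Pser * (pd1 * pd2))) := by
    unfold Wser Dfin
    rw [map_mul, map_mul]
    ring
  rw [e1]
  rw [coeff_mul_congr (A' := ∏ n ∈ Finset.range M, Ring.inverse (Fden n)) _ N
    (fun j hj => coeff_Qser j M (by omega))]
  rw [show (∏ n ∈ Finset.range M, Ring.inverse (Fden n)) *
        ((∏ n ∈ Finset.range M, Fden n) * PowerSeries.C (R := S13) (Pser * (pd1 * pd2)))
      = (∏ n ∈ Finset.range M, Ring.inverse (Fden n) * Fden n) *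
          PowerSeries.C (R := S13) (Pser * (pd1 * pd2)) from by
    rw [Finset.prod_mul_distrib]; ring]
  rw [Finset.prod_eq_one fun n _ => Ring.inverse_mul_cancel _ (isUnit_Fden n), one_mul,
    Pser_mul_pd]

/-! ### Support bounds: the class `SA` -/

/-- `SA f` : the `q^a` coefficient of `f` has `y`-support contained in `[-a, ∞)`. -/
def SA (f : PS) : Prop :=
  ∀ (a : ℕ) (m : ℤ), m < -(a : ℤ) → (PowerSeries.coeff (R := S13) a f).coeff m = 0

lemma SA.one : SA 1 := by
  intro a m hm
  rw [PowerSeries.coeff_one]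
  split_ifs with h
  · rw [← HahnSeries.single_zero_one, HahnSeries.coeff_single_of_ne (by omega)]
  · rfl

lemma hahn_coeff_sum {α : Type*} {s : Finset α} (F : α → S13) (m : ℤ) :
    (∑ p ∈ s, F p).coeff m = ∑ p ∈ s, (F p).coeff m :=
  map_sum (HahnSeries.coeff.addMonoidHom m) F s

lemma SA.mul {f g : PS} (hf : SA f) (hg : SA g) : SA (f * g) := by
  intro a m hm
  rw [PowerSeries.coeff_mul, hahn_coeff_sum]
  refine Finset.sum_eq_zero fun p hp => ?_
  rw [Finset.HasAntidiagonal.mem_antidiagonal] at hp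
  by_cases hmem : m ∈ (PowerSeries.coeff (R := S13) p.1 f * PowerSeries.coeff (R := S13) p.2 g).support
  · exfalso
    obtain ⟨r, hr, s, hs, hrs⟩ := HahnSeries.support_mul_subset hmem
    rw [HahnSeries.mem_support] at hr hs
    have h1 : ¬ r < -(p.1 : ℤ) := fun hc => hr (hf p.1 r hc)
    have h2 : ¬ s < -(p.2 : ℤ) := fun hc => hs (hg p.2 s hc)
    have hrs' : r + s = m := hrs
    omega
  · rw [HahnSeries.mem_support, not_not] at hmem
    exact hmem

lemma SA.pow {f : PS} (hf : SA f) (j : ℕ) : SA (f ^ j) := by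
  induction j with
  | zero => simpa using SA.one
  | succ j ih => rw [pow_succ]; exact ih.mul hf

lemma SA.prod {s : Finset ℕ} {f : ℕ → PS} (h : ∀ n ∈ s, SA (f n)) :
    SA (∏ n ∈ s, f n) :=
  Finset.prod_induction f SA (fun _ _ => SA.mul) SA.one h

lemma SA_C {s : S13} (hs : ∀ m : ℤ, m < 0 → s.coeff m = 0) : SA (PowerSeries.C (R := S13) s) := by
  intro a m hm
  rw [PowerSeries.coeff_C]
  split_ifs with h
  · exact hs m (by omega)
  · rfl

lemma SA_bin {ε e : ℤ} {k : ℕ} (hε : -(k : ℤ) ≤ ε) : SA (bin ε e k) := by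
  intro a m hm
  unfold bin
  rw [map_sub, PowerSeries.coeff_one, PowerSeries.coeff_C_mul_X_pow]
  have h1 : (if a = 0 then (1:S13) else 0).coeff m = 0 := by
    split_ifs with h
    · rw [← HahnSeries.single_zero_one, HahnSeries.coeff_single_of_ne (by omega)]
    · rfl
  have h2 : (if a = k then HahnSeries.single ε (LaurentPolynomial.T e) else (0:S13)).coeff m
      = 0 := by
    split_ifs with h
    · subst h
      exact HahnSeries.coeff_single_of_ne (by omega)
    · rfl
  rw [HahnSeries.coeff_sub, h1, h2, sub_zero]

lemma SA_geom {ε e : ℤ} {k : ℕ} (hε : -1 ≤ ε) :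
    SA (geom (A := S13) (HahnSeries.single ε (LaurentPolynomial.T e)) k) := by
  intro a m hm
  simp only [geom, PowerSeries.coeff_mk]
  split_ifs with h
  · rw [HahnSeries.single_pow]
    refine HahnSeries.coeff_single_of_ne fun heq => ?_
    have hj : ((a / (k+1) : ℕ) : ℤ) ≤ (a : ℤ) := by exact_mod_cast Nat.div_le_self a (k+1)
    have hnn : (0:ℤ) ≤ ((a / (k+1) : ℕ) : ℤ) := Int.natCast_nonneg _
    have hsm : -((a / (k+1) : ℕ) : ℤ) ≤ ((a / (k+1) : ℕ) : ℤ) * ε := by nlinarith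
    rw [nsmul_eq_mul] at heq
    rw [heq] at hm
    linarith
  · rfl

lemma SA_geom_one {k : ℕ} : SA (geom (1 : S13) k) := by
  have h : (1 : S13) = HahnSeries.single (0:ℤ) (LaurentPolynomial.T 0) := by
    rw [LaurentPolynomial.T_zero, HahnSeries.single_zero_one]
  rw [h]
  exact SA_geom (by omega)

/-- coefficients of `ofPowerSeries` at negative indices vanish. -/
lemma ops_coeff_neg (x : PowerSeries Lp) {m : ℤ} (hm : m < 0) :
    (HahnSeries.ofPowerSeries ℤ Lp x).coeff m = 0 := by
  rw [HahnSeries.ofPowerSeries_apply]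
  refine HahnSeries.embDomain_of_notMem_range ?_
  rintro ⟨n, hn⟩
  simp only [Nat.castOrderEmbedding_apply] at hn
  omega

lemma Pser_coeff_neg {m : ℤ} (hm : m < 0) : Pser.coeff m = 0 := by
  unfold Pser
  rw [mul_assoc, ← map_mul]
  rw [show m = (m + (-1)) + 1 from by ring, HahnSeries.coeff_single_mul_add,
    ops_coeff_neg _ (by omega), mul_zero]

lemma SA_Qser : SA Qser := by
  intro a m hm
  rw [coeff_Qser a a le_rfl]
  have hSA : SA (∏ n ∈ Finset.range a, Ring.inverse (Fden n)) := by
    refine SA.prod fun n _ => ?_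
    rw [ringInverse_Fden]
    unfold FdenInv
    exact ((((SA_geom (by omega)).mul (SA_geom (by omega))).mul
      (SA_geom_one.pow 20)).mul (SA_geom (by omega))).mul (SA_geom (by omega))
  exact hSA a m hm

lemma SA_Wser : SA Wser := by
  unfold Wser
  exact (SA_C fun m hm => Pser_coeff_neg hm).mul SA_Qser

/-! ### The substitution `τ : y^m q^a ↦ y^{-m} q^{a+m}` -/

/-- The substitution `τ` on `S⟦q⟧`. -/
def tau (f : PS) : PS :=
  PowerSeries.mk fun N =>
    HahnSeries.single (-(N : ℤ)) (1 : Lp) *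
      HahnSeries.ofPowerSeries ℤ Lp
        (PowerSeries.mk fun j => (PowerSeries.coeff (R := S13) j f).coeff ((N : ℤ) - j))

lemma tau_coeff (f : PS) (N : ℕ) (m : ℤ) :
    (PowerSeries.coeff (R := S13) N (tau f)).coeff m =
      if 0 ≤ (N : ℤ) + m then (PowerSeries.coeff (R := S13) ((N : ℤ) + m).toNat f).coeff (-m)
      else 0 := by
  unfold tau
  rw [PowerSeries.coeff_mk]
  have hs : ∀ x : S13, (HahnSeries.single (-(N:ℤ)) (1:Lp) * x).coeff m = x.coeff (m + N) := by
    intro x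
    have h0 := HahnSeries.coeff_single_mul_add (r := (1:Lp)) (x := x)
      (a := m + (N:ℤ)) (b := -(N:ℤ))
    rw [show m + (N:ℤ) + -(N:ℤ) = m from by ring, one_mul] at h0
    exact h0
  rw [hs]
  by_cases h : 0 ≤ (N : ℤ) + m
  · rw [if_pos h]
    rw [show (m + (N:ℤ)) = (((((N:ℤ) + m).toNat) : ℕ) : ℤ) from by omega,
      HahnSeries.ofPowerSeries_apply_coeff, PowerSeries.coeff_mk]
    congr 1
    omega
  · rw [if_neg h, ops_coeff_neg _ (by omega)]

/-- Multiplying by a binomial, coefficientwise in `q`. -/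
lemma coeff_mul_bin (g : PS) (ε e : ℤ) (k N : ℕ) :
    PowerSeries.coeff (R := S13) N (g * bin ε e k) =
      PowerSeries.coeff (R := S13) N g -
        (if k ≤ N then HahnSeries.single ε (LaurentPolynomial.T e) *
          PowerSeries.coeff (R := S13) (N - k) g else 0) := by
  unfold bin
  rw [mul_sub, mul_one, map_sub]
  congr 1
  rw [show g * (PowerSeries.C (R := S13) (HahnSeries.single ε (LaurentPolynomial.T e)) *
        PowerSeries.X ^ k)
      = g * PowerSeries.X ^ k * PowerSeries.C (R := S13) (HahnSeries.single ε (LaurentPolynomial.T e))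
      from by ring]
  rw [PowerSeries.coeff_mul_C, PowerSeries.coeff_mul_X_pow']
  split_ifs with h
  · rw [mul_comm]
  · rw [zero_mul]

/-- The key step: `τ` intertwines multiplication by binomials. -/
lemma tau_step {f : PS} (hf : SA f) (ε e : ℤ) (k k' : ℕ) (hk : (k' : ℤ) = k + ε) :
    tau (f * bin ε e k) = tau f * bin (-ε) e k' := by
  refine PowerSeries.ext fun N => HahnSeries.ext (funext fun m => ?_)
  have hTe : ∀ x : S13, (HahnSeries.single (-ε) (LaurentPolynomial.T e) * x).coeff m
      = LaurentPolynomial.T e * x.coeff (m + ε) := fun x => by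
    have h0 := HahnSeries.coeff_single_mul_add (r := LaurentPolynomial.T e) (x := x)
      (a := m + ε) (b := -ε)
    rw [show m + ε + -ε = m from by ring] at h0
    exact h0
  have hTe' : ∀ x : S13, (HahnSeries.single ε (LaurentPolynomial.T e) * x).coeff (-m)
      = LaurentPolynomial.T e * x.coeff (-m - ε) := fun x => by
    have h0 := HahnSeries.coeff_single_mul_add (r := LaurentPolynomial.T e) (x := x)
      (a := -m - ε) (b := ε)
    rw [show -m - ε + ε = -m from by ring] at h0
    exact h0
  rw [coeff_mul_bin (tau f) (-ε) e k' N, HahnSeries.coeff_sub, tau_coeff, tau_coeff f N m]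
  have hB' : ((if k' ≤ N then HahnSeries.single (-ε) (LaurentPolynomial.T e) *
        PowerSeries.coeff (R := S13) (N - k') (tau f) else 0).coeff m)
      = if (k:ℤ) ≤ (N:ℤ) + m ∧ k' ≤ N then
          LaurentPolynomial.T e *
            (PowerSeries.coeff (R := S13) (((N:ℤ)+m).toNat - k) f).coeff (-m - ε) else 0 := by
    by_cases h3 : k' ≤ N
    · rw [if_pos h3, hTe, tau_coeff]
      by_cases h4 : (k:ℤ) ≤ (N:ℤ) + m
      · rw [if_pos (show (0:ℤ) ≤ ((N - k' : ℕ):ℤ) + (m + ε) by omega), if_pos ⟨h4, h3⟩,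
          show (((N - k' : ℕ):ℤ) + (m + ε)).toNat = ((N:ℤ)+m).toNat - k from by omega,
          show -(m + ε) = -m - ε from by ring]
      · rw [if_neg (show ¬ (0:ℤ) ≤ ((N - k' : ℕ):ℤ) + (m + ε) by omega),
          if_neg (by tauto), mul_zero]
    · rw [if_neg h3, HahnSeries.coeff_zero, if_neg (by tauto)]
  rw [hB']
  by_cases h0 : 0 ≤ (N:ℤ) + m
  · rw [if_pos h0, if_pos h0, coeff_mul_bin, HahnSeries.coeff_sub]
    congr 1
    by_cases h2 : (k:ℤ) ≤ (N:ℤ) + m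
    · rw [if_pos (show k ≤ ((N:ℤ)+m).toNat by omega), hTe']
      by_cases h3 : k' ≤ N
      · rw [if_pos ⟨h2, h3⟩]
      · rw [if_neg (by tauto)]
        have hz : (PowerSeries.coeff (R := S13) (((N:ℤ)+m).toNat - k) f).coeff (-m - ε) = 0 := by
          apply hf
          omega
        rw [hz, mul_zero]
    · rw [if_neg (show ¬ k ≤ ((N:ℤ)+m).toNat by omega), if_neg (by tauto),
        HahnSeries.coeff_zero]
  · rw [if_neg h0, if_neg h0, if_neg (by rintro ⟨h4, -⟩; omega), sub_zero]

lemma tau_mul_pow {f : PS} (hf : SA f) (e : ℤ) (k : ℕ) (j : ℕ) :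
    tau (f * bin 0 e k ^ j) = tau f * bin 0 e k ^ j := by
  induction j with
  | zero => simp
  | succ j ih =>
    rw [pow_succ, ← mul_assoc]
    have hstep := tau_step
      (hf.mul ((SA_bin (ε := 0) (e := e) (k := k) (by omega)).pow j)) 0 e k k (by omega)
    rw [neg_zero] at hstep
    rw [hstep, ih, mul_assoc, ← pow_succ]

/-! ### The three families -/

/-- The `u^e y^{±1}` family of binomials, up to level `M`. -/
def Ufam (e : ℤ) (M : ℕ) : PS :=
  bin 1 e 0 * ((∏ n ∈ Finset.range M, bin 1 e (n+1)) * ∏ n ∈ Finset.range M, bin (-1) e (n+1))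

lemma SA_Ufam (e : ℤ) (M : ℕ) : SA (Ufam e M) :=
  (SA_bin (by omega)).mul ((SA.prod fun n _ => SA_bin (by omega)).mul
    (SA.prod fun n _ => SA_bin (by omega)))

lemma tau_mul_Ufam {f : PS} (hf : SA f) (e : ℤ) (M : ℕ) :
    tau (f * Ufam e M) * bin 1 e M = tau f * Ufam e M * bin (-1) e (M+1) := by
  induction M with
  | zero =>
    have h0 : Ufam e 0 = bin 1 e 0 := by
      unfold Ufam; simp
    rw [h0, tau_step hf 1 e 0 1 (by omega)]
    simp only [Nat.zero_add]
    ring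
  | succ M ih =>
    have hsucc : Ufam e (M+1) = Ufam e M * (bin 1 e (M+1) * bin (-1) e (M+1)) := by
      unfold Ufam
      rw [Finset.prod_range_succ, Finset.prod_range_succ]
      ring
    have sa1 : SA (f * Ufam e M) := hf.mul (SA_Ufam e M)
    have sa2 : SA (f * Ufam e M * bin 1 e (M+1)) := sa1.mul (SA_bin (by omega))
    have s1 := tau_step sa2 (-1) e (M+1) M (by omega)
    rw [neg_neg] at s1
    have s2 := tau_step sa1 1 e (M+1) (M+1+1) (by omega)
    calc tau (f * Ufam e (M+1)) * bin 1 e (M+1)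
        = tau (f * Ufam e M * bin 1 e (M+1) * bin (-1) e (M+1)) * bin 1 e (M+1) := by
          rw [hsucc]
          rw [show f * (Ufam e M * (bin 1 e (M+1) * bin (-1) e (M+1)))
              = f * Ufam e M * bin 1 e (M+1) * bin (-1) e (M+1) from by ring]
      _ = tau (f * Ufam e M * bin 1 e (M+1)) * bin 1 e M * bin 1 e (M+1) := by rw [s1]
      _ = (tau (f * Ufam e M) * bin 1 e M) * (bin (-1) e (M+1+1) * bin 1 e (M+1)) := by
          rw [s2]; ring
      _ = (tau f * Ufam e M * bin (-1) e (M+1)) * (bin (-1) e (M+1+1) * bin 1 e (M+1)) := by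
          rw [ih]
      _ = tau f * Ufam e (M+1) * bin (-1) e (M+1+1) := by rw [hsucc]; ring

/-- The `(1-q^n)^20` family. -/
def Zfam (M : ℕ) : PS := ∏ n ∈ Finset.range M, (bin 0 0 (n+1)) ^ 20

lemma SA_Zfam {M : ℕ} : SA (Zfam M) :=
  SA.prod fun n _ => (SA_bin (ε := 0) (e := 0) (k := n+1) (by omega)).pow 20

lemma tau_mul_Zfam {f : PS} (hf : SA f) (M : ℕ) :
    tau (f * Zfam M) = tau f * Zfam M := by
  induction M with
  | zero => unfold Zfam; simp
  | succ M ih =>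
    have hsucc : Zfam (M+1) = Zfam M * (bin 0 0 (M+1)) ^ 20 := by
      unfold Zfam
      rw [Finset.prod_range_succ]
    rw [hsucc, ← mul_assoc, tau_mul_pow (hf.mul SA_Zfam) 0 (M+1) 20, ih, mul_assoc]


/-! ### The functional equation -/

lemma C_pd1 : PowerSeries.C (R := S13) pd1 = bin 1 1 0 := by
  unfold pd1 bin
  rw [map_sub, map_one, pow_zero, mul_one]

lemma C_pd2 : PowerSeries.C (R := S13) pd2 = bin 1 (-1) 0 := by
  unfold pd2 bin
  rw [map_sub, map_one, pow_zero, mul_one]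

lemma Dfin_eq (M : ℕ) : Dfin M = Ufam 1 M * Ufam (-1) M * Zfam M := by
  unfold Dfin
  rw [C_pd1, C_pd2]
  rw [show ∏ n ∈ Finset.range M, Fden n
      = (∏ n ∈ Finset.range M, bin (-1) (-1) (n+1)) *
        (∏ n ∈ Finset.range M, bin 1 (-1) (n+1)) *
        (∏ n ∈ Finset.range M, (bin 0 0 (n+1)) ^ 20) *
        (∏ n ∈ Finset.range M, bin (-1) 1 (n+1)) *
        (∏ n ∈ Finset.range M, bin 1 1 (n+1)) from by
    rw [← Finset.prod_mul_distrib, ← Finset.prod_mul_distrib, ← Finset.prod_mul_distrib,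
      ← Finset.prod_mul_distrib]
    exact Finset.prod_congr rfl fun n _ => Fden_eq_bin n]
  unfold Ufam Zfam
  ring

lemma starstar (M : ℕ) :
    tau (Wser * Dfin M) * (bin 1 1 M * bin 1 (-1) M)
      = tau Wser * Dfin M * (bin (-1) 1 (M+1) * bin (-1) (-1) (M+1)) := by
  have sa0 : SA (Wser * Zfam M) := SA_Wser.mul SA_Zfam
  have sa1 : SA (Wser * Zfam M * Ufam (-1) M) := sa0.mul (SA_Ufam _ _)
  have t1 : tau (Wser * Zfam M) = tau Wser * Zfam M := tau_mul_Zfam SA_Wser M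
  have t2 := tau_mul_Ufam sa0 (-1) M
  have t3 := tau_mul_Ufam sa1 1 M
  calc tau (Wser * Dfin M) * (bin 1 1 M * bin 1 (-1) M)
      = (tau (Wser * Zfam M * Ufam (-1) M * Ufam 1 M) * bin 1 1 M) * bin 1 (-1) M := by
        rw [show Wser * Dfin M = Wser * Zfam M * Ufam (-1) M * Ufam 1 M from by
          rw [Dfin_eq]; ring]
        ring
    _ = (tau (Wser * Zfam M * Ufam (-1) M) * Ufam 1 M * bin (-1) 1 (M+1)) * bin 1 (-1) M := by
        rw [t3]
    _ = (tau (Wser * Zfam M * Ufam (-1) M) * bin 1 (-1) M) * (Ufam 1 M * bin (-1) 1 (M+1)) := by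
        ring
    _ = (tau (Wser * Zfam M) * Ufam (-1) M * bin (-1) (-1) (M+1)) *
          (Ufam 1 M * bin (-1) 1 (M+1)) := by rw [t2]
    _ = tau Wser * Dfin M * (bin (-1) 1 (M+1) * bin (-1) (-1) (M+1)) := by
        rw [t1, Dfin_eq]; ring

/-! ### Coefficient extraction -/

lemma coeff_tauWD (N : ℕ) (m : ℤ) (M : ℕ) (h1 : N < M) (h2 : (N:ℤ) + m ≤ M) :
    (PowerSeries.coeff (R := S13) N (tau Wser * Dfin M)).coeff m
      = if N = 1 ∧ m = -1 then 1 else 0 := by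
  have e2 : PowerSeries.coeff (R := S13) N (tau Wser * Dfin M)
      = PowerSeries.coeff (R := S13) N
          (tau Wser * Dfin M * (bin (-1) 1 (M+1) * bin (-1) (-1) (M+1))) :=
    (coeff_mul_EE ((EE_bin _ _ _ (by omega)).mul (EE_bin _ _ _ (by omega))) _).symm
  have e3 : PowerSeries.coeff (R := S13) N (tau (Wser * Dfin M) * (bin 1 1 M * bin 1 (-1) M))
      = PowerSeries.coeff (R := S13) N (tau (Wser * Dfin M)) :=
    coeff_mul_EE ((EE_bin _ _ _ (by omega)).mul (EE_bin _ _ _ (by omega))) _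
  rw [e2, ← starstar M, e3, tau_coeff]
  by_cases h0 : 0 ≤ (N:ℤ) + m
  · rw [if_pos h0, beta M (((N:ℤ)+m).toNat) (show ((N:ℤ)+m).toNat ≤ M by omega), PowerSeries.coeff_C]
    by_cases hz : ((N:ℤ)+m).toNat = 0
    · rw [if_pos hz]
      by_cases hNm : N = 1 ∧ m = -1
      · rw [if_pos hNm, hNm.2]
        norm_num [HahnSeries.coeff_single_same]
      · rw [if_neg hNm]
        refine HahnSeries.coeff_single_of_ne fun hc => hNm ?_
        constructor <;> omega
    · rw [if_neg hz, if_neg (by rintro ⟨rfl, rfl⟩; omega), HahnSeries.coeff_zero]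
  · rw [if_neg h0, if_neg (by rintro ⟨rfl, rfl⟩; omega)]

/-- `Wshift = q y⁻² W`. -/
def Wshift : PS :=
  PowerSeries.X * (PowerSeries.C (R := S13) (HahnSeries.single (-2 : ℤ) 1) * Wser)

lemma coeff_Wshift (N : ℕ) :
    PowerSeries.coeff (R := S13) N Wshift
      = if 1 ≤ N then HahnSeries.single (-2:ℤ) 1 * PowerSeries.coeff (R := S13) (N-1) Wser else 0 := by
  have e1 : Wshift = (PowerSeries.C (R := S13) (HahnSeries.single (-2 : ℤ) 1) * Wser) *
      PowerSeries.X ^ 1 := by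
    unfold Wshift; ring
  rw [e1, PowerSeries.coeff_mul_X_pow']
  split_ifs with h
  · rw [PowerSeries.coeff_C_mul]
  · rfl

lemma coeff_WshiftD (N : ℕ) (m : ℤ) (M : ℕ) (hNM : N ≤ M) :
    (PowerSeries.coeff (R := S13) N (Wshift * Dfin M)).coeff m
      = if N = 1 ∧ m = -1 then 1 else 0 := by
  have e1 : Wshift * Dfin M
      = (PowerSeries.C (R := S13) (HahnSeries.single (-2:ℤ) 1) * (Wser * Dfin M)) *
        PowerSeries.X ^ 1 := by
    unfold Wshift; ring
  rw [e1, PowerSeries.coeff_mul_X_pow']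
  by_cases hN : 1 ≤ N
  · rw [if_pos hN, PowerSeries.coeff_C_mul, beta M (N-1) (by omega), PowerSeries.coeff_C]
    by_cases hz : N - 1 = 0
    · rw [if_pos hz, HahnSeries.single_mul_single]
      by_cases hNm : N = 1 ∧ m = -1
      · rw [if_pos hNm, hNm.2]
        norm_num [HahnSeries.coeff_single_same]
      · rw [if_neg hNm]
        refine HahnSeries.coeff_single_of_ne fun hc => hNm ?_
        constructor <;> omega
    · rw [if_neg hz, mul_zero, if_neg (by rintro ⟨rfl, rfl⟩; omega), HahnSeries.coeff_zero]
  · rw [if_neg hN, if_neg (by rintro ⟨rfl, rfl⟩; omega), HahnSeries.coeff_zero]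

/-! ### Cancellation -/

lemma coeff_mul_Dfin_stable (p : PS) (N M : ℕ) (h : N + 1 ≤ M) :
    PowerSeries.coeff (R := S13) N (p * Dfin M) = PowerSeries.coeff (R := S13) N (p * Dfin (N+1)) := by
  have e1 : Dfin M = Dfin (N+1) * ∏ n ∈ Finset.range M \ Finset.range (N+1), Fden n := by
    unfold Dfin
    rw [← Finset.prod_sdiff (Finset.range_subset_range.2 h)]
    ring
  rw [e1, ← mul_assoc]
  refine coeff_mul_EE (EE.prod fun n hn => ?_) _
  simp only [Finset.mem_sdiff, Finset.mem_range] at hn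
  exact EE_Fden n (by omega)

lemma pdpd_inv : pd1 * (pd2 * (Pser * HahnSeries.single (-1:ℤ) 1)) = 1 := by
  rw [show pd1 * (pd2 * (Pser * HahnSeries.single (-1:ℤ) 1))
      = (Pser * (pd1 * pd2)) * HahnSeries.single (-1:ℤ) 1 from by ring,
    Pser_mul_pd, HahnSeries.single_mul_single]
  norm_num [HahnSeries.single_zero_one]

lemma constCoeff_Dfin (M : ℕ) :
    PowerSeries.coeff (R := S13) 0 (Dfin M) = pd1 * pd2 := by
  rw [PowerSeries.coeff_zero_eq_constantCoeff_apply]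
  unfold Dfin
  rw [map_mul, map_mul, map_prod]
  have hF : ∀ n ∈ Finset.range M, PowerSeries.constantCoeff (R := S13) (Fden n) = 1 := by
    intro n _
    unfold Fden
    simp [PowerSeries.constantCoeff_X, zero_pow]
  rw [Finset.prod_congr rfl hF]
  simp [PowerSeries.constantCoeff_C]

lemma tauW_eq : tau Wser = Wshift := by
  refine PowerSeries.ext fun N => ?_
  induction N using Nat.strong_induction_on with
  | _ N ih =>
  have key : ∀ m : ℤ, (PowerSeries.coeff (R := S13) N (tau Wser * Dfin (N+1))).coeff m
      = (PowerSeries.coeff (R := S13) N (Wshift * Dfin (N+1))).coeff m := by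
    intro m
    have hM1 : N < N + 1 + m.toNat := by omega
    have hM2 : (N:ℤ) + m ≤ (N + 1 + m.toNat : ℕ) := by
      push_cast
      omega
    rw [show PowerSeries.coeff (R := S13) N (tau Wser * Dfin (N+1))
        = PowerSeries.coeff (R := S13) N (tau Wser * Dfin (N + 1 + m.toNat)) from
      (coeff_mul_Dfin_stable _ N _ (by omega)).symm]
    rw [show PowerSeries.coeff (R := S13) N (Wshift * Dfin (N+1))
        = PowerSeries.coeff (R := S13) N (Wshift * Dfin (N + 1 + m.toNat)) from
      (coeff_mul_Dfin_stable _ N _ (by omega)).symm]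
    rw [coeff_tauWD N m _ hM1 hM2, coeff_WshiftD N m _ (by omega)]
  have keyS : PowerSeries.coeff (R := S13) N (tau Wser * Dfin (N+1))
      = PowerSeries.coeff (R := S13) N (Wshift * Dfin (N+1)) :=
    HahnSeries.ext (funext key)
  rw [PowerSeries.coeff_mul, PowerSeries.coeff_mul,
    Finset.Nat.sum_antidiagonal_eq_sum_range_succ_mk,
    Finset.Nat.sum_antidiagonal_eq_sum_range_succ_mk,
    Finset.sum_range_succ, Finset.sum_range_succ] at keyS
  have hsame : ∀ i ∈ Finset.range N,
      PowerSeries.coeff (R := S13) i (tau Wser) * PowerSeries.coeff (R := S13) (N - i) (Dfin (N+1))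
        = PowerSeries.coeff (R := S13) i Wshift * PowerSeries.coeff (R := S13) (N - i) (Dfin (N+1)) := by
    intro i hi
    rw [Finset.mem_range] at hi
    rw [ih i hi]
  rw [Finset.sum_congr rfl hsame, add_right_inj, Nat.sub_self, constCoeff_Dfin] at keyS
  have hc := congrArg (· * (Pser * HahnSeries.single (-1:ℤ) 1)) keyS
  simp only [mul_assoc] at hc
  rw [pdpd_inv, mul_one, mul_one] at hc
  exact hc

end KYaux


/-- Symmetry of the Kawai–Yoshioka coefficients: for all `h, d ≥ 0`, the coefficient of
`y^{1−h+d}` in the `q^{h−1}` coefficient of `W` equals the coefficient of `y^{1−d+h}` in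
the `q^{d−1}` coefficient of `W`, as Laurent polynomials in `u`. -/
theorem KY_coefficient_symmetry (h d : ℕ) :
    (cfW ((h : ℤ) - 1)).coeff (1 - (h : ℤ) + (d : ℤ)) =
    (cfW ((d : ℤ) - 1)).coeff (1 - (d : ℤ) + (h : ℤ)) := by
  have key := congrArg (fun f => (PowerSeries.coeff (R := S13) d f).coeff ((h:ℤ) - 1 - d))
    KYaux.tauW_eq
  rw [KYaux.tau_coeff] at key
  rw [KYaux.coeff_Wshift] at key
  -- Left side
  have hL : (cfW ((h : ℤ) - 1)).coeff (1 - (h : ℤ) + (d : ℤ))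
      = if 0 ≤ (d:ℤ) + ((h:ℤ) - 1 - d) then
          (PowerSeries.coeff (R := S13) ((d:ℤ) + ((h:ℤ) - 1 - d)).toNat Wser).coeff
            (-((h:ℤ) - 1 - d))
        else 0 := by
    unfold cfW
    by_cases hh : 0 ≤ (h:ℤ) - 1
    · rw [if_pos hh, if_pos (by omega)]
      rw [show ((d:ℤ) + ((h:ℤ) - 1 - d)).toNat = ((h:ℤ) - 1).toNat from by omega]
      congr 1
      ring
    · rw [if_neg hh, if_neg (by omega), HahnSeries.coeff_zero]
  -- Right side
  have hR : (cfW ((d : ℤ) - 1)).coeff (1 - (d : ℤ) + (h : ℤ))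
      = (if 1 ≤ d then HahnSeries.single (-2:ℤ) 1 * PowerSeries.coeff (R := S13) (d-1) Wser
          else 0).coeff ((h:ℤ) - 1 - d) := by
    unfold cfW
    by_cases hd : 1 ≤ d
    · rw [if_pos (by omega : 0 ≤ (d:ℤ) - 1), if_pos hd]
      rw [show (h:ℤ) - 1 - d = (1 - (d:ℤ) + h) + (-2) from by ring,
        HahnSeries.coeff_single_mul_add, one_mul]
      rw [show ((d:ℤ) - 1).toNat = d - 1 from by omega]
    · rw [if_neg (by omega : ¬ (0:ℤ) ≤ (d:ℤ) - 1), if_neg hd]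
      simp
  rw [hL, hR, key]

end
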